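/- Let U be a unitary operator on ℂᵈ and define the controlled gate X_U on ℂᵈ ⊗ ℂᵈ by X_U(|0⟩ ⊗ |k⟩) = |0⟩ ⊗ U|k⟩ and X_U(|j⟩ ⊗ |k⟩) = |j⟩ ⊗ |k⟩ for j ≠ 0. Then X_U is primitive (maps all decomposable tensors to decomposable tensors) if and only if U is a scalar multiple of the identity, U = e^{iθ} I. -/

import Mathlib

open Matrix Kronecker Complex

/-- The tensor (Kronecker) product of two vectors of `ℂᵈ`, as a vector of `ℂᵈ ⊗ ℂᵈ`. -/
def tensorVec {d : ℕ} (x y : Fin d → ℂ) : Fin d × Fin d → ℂ := fun p => x p.1 * y p.2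

/-- A vector of `ℂᵈ ⊗ ℂᵈ` is decomposable if it is a tensor product of two vectors. -/
def Decomposable {d : ℕ} (z : Fin d × Fin d → ℂ) : Prop := ∃ u v : Fin d → ℂ, z = tensorVec u v

/-- A gate on `ℂᵈ ⊗ ℂᵈ` is primitive if it maps decomposable tensors to decomposable tensors. -/
def Primitive {d : ℕ} (V : Matrix (Fin d × Fin d) (Fin d × Fin d) ℂ) : Prop :=
  ∀ x y : Fin d → ℂ, Decomposable (V.mulVec (tensorVec x y))

lemma mulVec_XU {d : ℕ} [NeZero d] (U : Matrix (Fin d) (Fin d) ℂ) (z : Fin d × Fin d → ℂ)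
    (p : Fin d × Fin d) :
    (Matrix.of fun p q : Fin d × Fin d =>
        if p.1 = q.1 then (if p.1 = 0 then U p.2 q.2 else if p.2 = q.2 then 1 else 0) else 0).mulVec
      z p = if p.1 = 0 then ∑ l, U p.2 l * z (0, l) else z p := by
  classical
  simp only [Matrix.mulVec, dotProduct, Matrix.of_apply, Fintype.sum_prod_type]
  rw [Finset.sum_eq_single p.1]
  · by_cases h : p.1 = 0
    · simp [h]
    · simp only [h, if_true, if_false, ite_mul, one_mul, zero_mul]
      rw [Finset.sum_ite_eq]
      simp
  · intro b _ hb
    simp [Ne.symm hb]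
  · simp

lemma eigen_of_primitive {d : ℕ} [NeZero d] (hd : 2 ≤ d) (U : Matrix (Fin d) (Fin d) ℂ)
    (hP : Primitive (Matrix.of fun p q : Fin d × Fin d =>
        if p.1 = q.1 then (if p.1 = 0 then U p.2 q.2 else if p.2 = q.2 then 1 else 0) else 0))
    (y : Fin d → ℂ) (hy : y ≠ 0) : ∃ c : ℂ, U.mulVec y = c • y := by
  classical
  set one : Fin d := ⟨1, hd⟩ with hone
  have hone0 : one ≠ 0 := by
    simp [hone, Fin.ext_iff]
  set x : Fin d → ℂ := Pi.single (0 : Fin d) 1 + Pi.single one 1 with hx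
  have hx0 : x 0 = 1 := by simp [hx, Pi.single_eq_of_ne (Ne.symm hone0)]
  have hxone : x one = 1 := by simp [hx, Pi.single_eq_of_ne hone0]
  obtain ⟨u, v, huv⟩ := hP x y
  have h0 : ∀ k, ∑ l, U k l * y l = u 0 * v k := by
    intro k
    have := congrFun huv ((0 : Fin d), k)
    rw [mulVec_XU] at this
    simpa [tensorVec, hx0] using this
  have h1 : ∀ k, y k = u one * v k := by
    intro k
    have := congrFun huv ((one : Fin d), k)
    rw [mulVec_XU] at this
    simpa [tensorVec, hone0, hxone] using this
  obtain ⟨k0, hk0⟩ : ∃ k, y k ≠ 0 := Function.ne_iff.mp hy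
  have hu1 : u one ≠ 0 := by
    intro h
    apply hk0
    rw [h1 k0, h, zero_mul]
  refine ⟨u 0 / u one, ?_⟩
  funext k
  have : U.mulVec y k = u 0 * v k := h0 k
  rw [Pi.smul_apply, smul_eq_mul, this, h1 k]
  field_simp

lemma scalar_of_eigen {d : ℕ} [NeZero d] {U : Matrix (Fin d) (Fin d) ℂ}
    (h : ∀ y : Fin d → ℂ, y ≠ 0 → ∃ c : ℂ, U.mulVec y = c • y) :
    ∃ c : ℂ, U = c • 1 := by
  classical
  have hsingle : ∀ i : Fin d, (Pi.single i 1 : Fin d → ℂ) ≠ 0 := by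
    intro i h
    have := congrFun h i
    simp at this
  obtain ⟨c0, hc0⟩ := h (Pi.single 0 1) (hsingle 0)
  have key : ∀ i : Fin d, U.mulVec (Pi.single i 1) = c0 • (Pi.single i 1 : Fin d → ℂ) := by
    intro i
    by_cases hi : i = 0
    · subst hi; exact hc0
    · obtain ⟨ci, hci⟩ := h (Pi.single i 1) (hsingle i)
      have hne : (Pi.single (0 : Fin d) 1 + Pi.single i 1 : Fin d → ℂ) ≠ 0 := by
        intro hcontr
        have := congrFun hcontr 0
        simp [Pi.single_eq_of_ne (Ne.symm hi)] at this
      obtain ⟨c', hc'⟩ := h _ hne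
      rw [Matrix.mulVec_add, hc0, hci] at hc'
      have hati := congrFun hc' i
      simp [Pi.single_eq_of_ne hi] at hati
      have hat0 := congrFun hc' 0
      simp [Pi.single_eq_of_ne (Ne.symm hi)] at hat0
      rw [hci, hati, ← hat0]
  refine ⟨c0, ?_⟩
  ext k i
  have := congrFun (key i) k
  rw [Matrix.mulVec_single] at this
  by_cases hk : k = i
  · subst hk; simpa using this
  · simpa [hk, Pi.single_eq_of_ne hk, Matrix.one_apply_ne hk] using this

theorem stmt6 {d : ℕ} [NeZero d] (hd : 2 ≤ d)
    (U : Matrix (Fin d) (Fin d) ℂ) (hU : U ∈ Matrix.unitaryGroup (Fin d) ℂ) :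
    Primitive (Matrix.of fun p q : Fin d × Fin d =>
        if p.1 = q.1 then (if p.1 = 0 then U p.2 q.2 else if p.2 = q.2 then 1 else 0) else 0)
      ↔ ∃ θ : ℝ, U = Complex.exp ((θ : ℂ) * Complex.I) • (1 : Matrix (Fin d) (Fin d) ℂ) := by
  constructor
  · intro hP
    obtain ⟨c, hc⟩ := scalar_of_eigen (fun y hy => eigen_of_primitive hd U hP y hy)
    -- unitarity forces |c| = 1
    have hstar : U * star U = 1 := Matrix.mem_unitaryGroup_iff.mp hU
    rw [hc] at hstar
    have hcc : (starRingEnd ℂ) c * c = 1 := by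
      have := congrFun (congrFun (congrArg (fun M => M) hstar) 0) 0
      simpa [Matrix.smul_mul, Matrix.mul_smul, Matrix.one_apply] using this
    have habs : ‖c‖ = 1 := by
      have hns : Complex.normSq c = 1 := by
        have : ((Complex.normSq c : ℝ) : ℂ) = 1 := by
          rw [← Complex.normSq_eq_conj_mul_self] at hcc
          exact_mod_cast hcc
        exact_mod_cast this
      have h2 : ‖c‖ ^ 2 = 1 := by rw [Complex.sq_norm, hns]
      nlinarith [norm_nonneg c]
    refine ⟨Complex.arg c, ?_⟩
    have hce : c = Complex.exp ((c.arg : ℂ) * Complex.I) := by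
      rw [Complex.exp_mul_I]
      conv_lhs => rw [← Complex.norm_mul_cos_add_sin_mul_I c]
      rw [habs]
      simp
    rw [hc, ← hce]
  · rintro ⟨θ, rfl⟩ x y
    set e := Complex.exp ((θ : ℂ) * Complex.I) with he
    refine ⟨fun j => if j = 0 then e * x 0 else x j, y, ?_⟩
    funext p
    rw [mulVec_XU]
    by_cases hp : p.1 = 0
    · simp only [hp, if_true, tensorVec, Matrix.smul_apply, Matrix.one_apply, smul_eq_mul,
        mul_ite, mul_one, mul_zero, ite_mul, zero_mul]
      rw [Finset.sum_ite_eq]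
      simp [hp]
      ring
    · simp [tensorVec, hp]
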